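/- For any real matrices P ∈ ℝ^{N×ρ} and Q ∈ ℝ^{T×ρ}, the nuclear norm of their product satisfies ‖P Qᵀ‖_* ≤ (1/2)(‖P‖_F² + ‖Q‖_F²). -/

import Mathlib

open Matrix

lemma transpose_mul_self_isHermitian {N T : ℕ} (X : Matrix (Fin N) (Fin T) ℝ) :
    (Xᵀ * X).IsHermitian := by
  have := Matrix.isHermitian_conjTranspose_mul_self X
  simpa [Matrix.conjTranspose_eq_transpose_of_trivial] using this

/-- Nuclear norm: sum of singular values (square roots of eigenvalues of `XᵀX`). -/
noncomputable def nuclearNorm {N T : ℕ} (X : Matrix (Fin N) (Fin T) ℝ) : ℝ :=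
  ∑ i, Real.sqrt ((transpose_mul_self_isHermitian X).eigenvalues i)

/-- Frobenius norm `‖X‖_F = √(trace (XᵀX))`. -/
noncomputable def frobeniusNorm {N T : ℕ} (X : Matrix (Fin N) (Fin T) ℝ) : ℝ :=
  Real.sqrt (Matrix.trace (Xᵀ * X))

noncomputable def toEuc {n : ℕ} (x : Fin n → ℝ) : EuclideanSpace ℝ (Fin n) :=
  (WithLp.equiv 2 (Fin n → ℝ)).symm x

lemma euc_inner_eq_dot {n : ℕ} (x y : Fin n → ℝ) :
    @inner ℝ _ _ (toEuc x) (toEuc y) = x ⬝ᵥ y := by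
  simp [toEuc, PiLp.inner_apply, dotProduct, mul_comm]

lemma euc_norm_sq {n : ℕ} (x : Fin n → ℝ) : ‖toEuc x‖ ^ 2 = x ⬝ᵥ x := by
  rw [← real_inner_self_eq_norm_sq, euc_inner_eq_dot]

lemma toEuc_coe {n : ℕ} (y : EuclideanSpace ℝ (Fin n)) : toEuc (⇑y : Fin n → ℝ) = y := rfl

lemma bessel_dot {n : ℕ} {ι : Type*} [Fintype ι] [DecidableEq ι] (u : ι → (Fin n → ℝ))
    (h : ∀ i j, u i ⬝ᵥ u j = if i = j then 1 else 0) (x : Fin n → ℝ) :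
    ∑ i, (u i ⬝ᵥ x) ^ 2 ≤ x ⬝ᵥ x := by
  have hu : Orthonormal ℝ (fun i => toEuc (u i)) := by
    rw [orthonormal_iff_ite]
    intro i j
    rw [euc_inner_eq_dot]
    exact h i j
  have hb := hu.sum_inner_products_le (s := Finset.univ) (x := toEuc x)
  calc ∑ i, (u i ⬝ᵥ x) ^ 2
      = ∑ i, ‖@inner ℝ _ _ (toEuc (u i)) (toEuc x)‖ ^ 2 := by
        refine Finset.sum_congr rfl fun i _ => ?_
        rw [euc_inner_eq_dot, Real.norm_eq_abs, sq_abs]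
    _ ≤ ‖toEuc x‖ ^ 2 := hb
    _ = x ⬝ᵥ x := euc_norm_sq x

lemma dot_le_half {n : ℕ} (a b : Fin n → ℝ) :
    a ⬝ᵥ b ≤ (1 / 2) * (a ⬝ᵥ a + b ⬝ᵥ b) := by
  have h : ∀ i : Fin n, a i * b i ≤ (1/2) * (a i * a i + b i * b i) := by
    intro i; nlinarith [sq_nonneg (a i - b i)]
  calc a ⬝ᵥ b = ∑ i, a i * b i := rfl
    _ ≤ ∑ i, (1/2) * (a i * a i + b i * b i) := Finset.sum_le_sum fun i _ => h i
    _ = (1/2) * (a ⬝ᵥ a + b ⬝ᵥ b) := by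
        simp [dotProduct, Finset.mul_sum, Finset.sum_add_distrib, mul_add]

lemma dot_self_nonneg {n : ℕ} (a : Fin n → ℝ) : 0 ≤ a ⬝ᵥ a :=
  Finset.sum_nonneg fun i _ => mul_self_nonneg _

/-- `‖P Qᵀ‖_* ≤ (1/2)(‖P‖_F² + ‖Q‖_F²)`. -/
theorem nuclearNorm_mul_transpose_le {N T ρ : ℕ}
    (P : Matrix (Fin N) (Fin ρ) ℝ) (Q : Matrix (Fin T) (Fin ρ) ℝ) :
    nuclearNorm (P * Qᵀ) ≤ (1 / 2) * (frobeniusNorm P ^ 2 + frobeniusNorm Q ^ 2) := by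
  classical
  set M := P * Qᵀ with hMdef
  have hM := transpose_mul_self_isHermitian M
  set μ : Fin T → ℝ := hM.eigenvalues with hμdef
  set v := hM.eigenvectorBasis with hvdef
  set w : Fin T → (Fin N → ℝ) := fun i => M *ᵥ ⇑(v i) with hwdef
  have hMM : ∀ i, (Mᵀ * M) *ᵥ ⇑(v i) = μ i • ⇑(v i) := fun i => hM.mulVec_eigenvectorBasis i
  have hvorth : ∀ i j, ⇑(v i) ⬝ᵥ ⇑(v j) = if i = j then 1 else 0 := by
    intro i j
    have h2 := (orthonormal_iff_ite.mp v.orthonormal) i j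
    rw [← euc_inner_eq_dot, toEuc_coe, toEuc_coe]
    exact_mod_cast h2
  have hw_dot : ∀ i j, w i ⬝ᵥ w j = μ j * (⇑(v i) ⬝ᵥ ⇑(v j)) := by
    intro i j
    calc w i ⬝ᵥ w j = ⇑(v i) ⬝ᵥ ((Mᵀ * M) *ᵥ ⇑(v j)) := by
          conv_rhs => rw [← Matrix.mulVec_mulVec, Matrix.dotProduct_mulVec,
            Matrix.vecMul_transpose]
      _ = μ j * (⇑(v i) ⬝ᵥ ⇑(v j)) := by rw [hMM j, dotProduct_smul]; rfl
  have hwself : ∀ i, w i ⬝ᵥ w i = μ i := by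
    intro i; rw [hw_dot i i, hvorth i i]; simp
  have hμnn : ∀ i, 0 ≤ μ i := fun i => (hwself i) ▸ dot_self_nonneg (w i)
  set u : Fin T → (Fin N → ℝ) := fun i => (Real.sqrt (μ i))⁻¹ • w i with hudef
  have hwzero : ∀ i, μ i = 0 → w i = 0 := by
    intro i h0
    exact dotProduct_self_eq_zero.mp (by rw [hwself i, h0])
  have huw : ∀ i, u i ⬝ᵥ w i = Real.sqrt (μ i) := by
    intro i
    show ((Real.sqrt (μ i))⁻¹ • w i) ⬝ᵥ w i = _
    rw [smul_dotProduct, hwself i]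
    rcases eq_or_lt_of_le (hμnn i) with h0 | hpos
    · simp [← h0]
    · have hs : Real.sqrt (μ i) ≠ 0 := ne_of_gt (Real.sqrt_pos.mpr hpos)
      rw [smul_eq_mul]
      field_simp
      rw [Real.sq_sqrt (hμnn i)]
  have huu : ∀ i j, μ i ≠ 0 → μ j ≠ 0 → u i ⬝ᵥ u j = if i = j then 1 else 0 := by
    intro i j hi hj
    show ((Real.sqrt (μ i))⁻¹ • w i) ⬝ᵥ ((Real.sqrt (μ j))⁻¹ • w j) = _
    rw [smul_dotProduct, dotProduct_smul, hw_dot i j, hvorth i j]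
    by_cases hij : i = j
    · subst hij
      have hs : Real.sqrt (μ i) ≠ 0 :=
        ne_of_gt (Real.sqrt_pos.mpr (lt_of_le_of_ne (hμnn i) (Ne.symm hi)))
      simp only [if_pos rfl, mul_one, smul_eq_mul]
      field_simp
      rw [Real.sq_sqrt (hμnn i)]
    · simp [hij]
  have huzero : ∀ i, μ i = 0 → u i = 0 := by
    intro i h0
    show (Real.sqrt (μ i))⁻¹ • w i = 0
    rw [hwzero i h0, smul_zero]
  -- Bessel for the u family
  have hbesselU : ∀ x : Fin N → ℝ, ∑ i, (u i ⬝ᵥ x) ^ 2 ≤ x ⬝ᵥ x := by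
    intro x
    set s : Finset (Fin T) := Finset.univ.filter (fun i => μ i ≠ 0) with hsdef
    have hs1 : ∑ i, (u i ⬝ᵥ x) ^ 2 = ∑ i ∈ s, (u i ⬝ᵥ x) ^ 2 := by
      rw [eq_comm]
      apply Finset.sum_subset (Finset.subset_univ s)
      intro i _ hmem
      have : μ i = 0 := by
        by_contra hne
        exact hmem (Finset.mem_filter.mpr ⟨Finset.mem_univ i, hne⟩)
      rw [huzero i this]
      simp [zero_dotProduct]
    rw [hs1, ← Finset.sum_coe_sort s (fun i => (u i ⬝ᵥ x) ^ 2)]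
    apply bessel_dot (ι := ↥s) (fun i => u i.1) ?_ x
    intro a b
    have ha : μ a.1 ≠ 0 := (Finset.mem_filter.mp a.2).2
    have hb : μ b.1 ≠ 0 := (Finset.mem_filter.mp b.2).2
    rw [huu a.1 b.1 ha hb]
    by_cases hab : a = b
    · simp [hab]
    · have : a.1 ≠ b.1 := fun h => hab (Subtype.ext h)
      simp [hab, this]
  have hbesselV : ∀ x : Fin T → ℝ, ∑ i, (⇑(v i) ⬝ᵥ x) ^ 2 ≤ x ⬝ᵥ x :=
    fun x => bessel_dot (fun i => ⇑(v i)) hvorth x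
  -- trace identities
  have htraceP : Matrix.trace (Pᵀ * P) = ∑ k, Pᵀ k ⬝ᵥ Pᵀ k := by
    simp [Matrix.trace, Matrix.mul_apply, Matrix.diag, dotProduct,
      Matrix.transpose_apply]
  have htraceQ : Matrix.trace (Qᵀ * Q) = ∑ k, Qᵀ k ⬝ᵥ Qᵀ k := by
    simp [Matrix.trace, Matrix.mul_apply, Matrix.diag, dotProduct,
      Matrix.transpose_apply]
  -- the two Frobenius bounds
  have hPsum : ∑ i, (Pᵀ *ᵥ u i) ⬝ᵥ (Pᵀ *ᵥ u i) ≤ Matrix.trace (Pᵀ * P) := by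
    have expand : ∀ i, (Pᵀ *ᵥ u i) ⬝ᵥ (Pᵀ *ᵥ u i) = ∑ k, (u i ⬝ᵥ Pᵀ k) ^ 2 := by
      intro i
      simp [dotProduct, Matrix.mulVec, sq, dotProduct_comm, mul_comm]
    calc ∑ i, (Pᵀ *ᵥ u i) ⬝ᵥ (Pᵀ *ᵥ u i) = ∑ i, ∑ k, (u i ⬝ᵥ Pᵀ k) ^ 2 :=
          Finset.sum_congr rfl fun i _ => expand i
      _ = ∑ k, ∑ i, (u i ⬝ᵥ Pᵀ k) ^ 2 := Finset.sum_comm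
      _ ≤ ∑ k, Pᵀ k ⬝ᵥ Pᵀ k := Finset.sum_le_sum fun k _ => hbesselU (Pᵀ k)
      _ = Matrix.trace (Pᵀ * P) := htraceP.symm
  have hQsum : ∑ i, (Qᵀ *ᵥ ⇑(v i)) ⬝ᵥ (Qᵀ *ᵥ ⇑(v i)) ≤ Matrix.trace (Qᵀ * Q) := by
    have expand : ∀ i, (Qᵀ *ᵥ ⇑(v i)) ⬝ᵥ (Qᵀ *ᵥ ⇑(v i)) = ∑ k, (⇑(v i) ⬝ᵥ Qᵀ k) ^ 2 := by
      intro i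
      simp [dotProduct, Matrix.mulVec, sq, dotProduct_comm, mul_comm]
    calc ∑ i, (Qᵀ *ᵥ ⇑(v i)) ⬝ᵥ (Qᵀ *ᵥ ⇑(v i)) = ∑ i, ∑ k, (⇑(v i) ⬝ᵥ Qᵀ k) ^ 2 :=
          Finset.sum_congr rfl fun i _ => expand i
      _ = ∑ k, ∑ i, (⇑(v i) ⬝ᵥ Qᵀ k) ^ 2 := Finset.sum_comm
      _ ≤ ∑ k, Qᵀ k ⬝ᵥ Qᵀ k := Finset.sum_le_sum fun k _ => hbesselV (Qᵀ k)
      _ = Matrix.trace (Qᵀ * Q) := htraceQ.symm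
  -- rewrite each sqrt term
  have hterm : ∀ i, Real.sqrt (μ i) = (Pᵀ *ᵥ u i) ⬝ᵥ (Qᵀ *ᵥ ⇑(v i)) := by
    intro i
    rw [← huw i]
    have : w i = P *ᵥ (Qᵀ *ᵥ ⇑(v i)) := by
      show M *ᵥ ⇑(v i) = _
      rw [Matrix.mulVec_mulVec, hMdef]
    rw [this, Matrix.dotProduct_mulVec, ← Matrix.mulVec_transpose]
  have hfrobP : frobeniusNorm P ^ 2 = Matrix.trace (Pᵀ * P) := by
    rw [frobeniusNorm, Real.sq_sqrt]
    rw [htraceP]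
    exact Finset.sum_nonneg fun k _ => dot_self_nonneg _
  have hfrobQ : frobeniusNorm Q ^ 2 = Matrix.trace (Qᵀ * Q) := by
    rw [frobeniusNorm, Real.sq_sqrt]
    rw [htraceQ]
    exact Finset.sum_nonneg fun k _ => dot_self_nonneg _
  have main : ∑ i, Real.sqrt (μ i) ≤
      (1 / 2) * (frobeniusNorm P ^ 2 + frobeniusNorm Q ^ 2) := by
    calc ∑ i, Real.sqrt (μ i)
        = ∑ i, (Pᵀ *ᵥ u i) ⬝ᵥ (Qᵀ *ᵥ ⇑(v i)) := Finset.sum_congr rfl fun i _ => hterm i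
      _ ≤ ∑ i, (1 / 2) * ((Pᵀ *ᵥ u i) ⬝ᵥ (Pᵀ *ᵥ u i) + (Qᵀ *ᵥ ⇑(v i)) ⬝ᵥ (Qᵀ *ᵥ ⇑(v i))) :=
          Finset.sum_le_sum fun i _ => dot_le_half _ _
      _ = (1 / 2) * (∑ i, (Pᵀ *ᵥ u i) ⬝ᵥ (Pᵀ *ᵥ u i)
            + ∑ i, (Qᵀ *ᵥ ⇑(v i)) ⬝ᵥ (Qᵀ *ᵥ ⇑(v i))) := by
          rw [← Finset.mul_sum, Finset.sum_add_distrib]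
      _ ≤ (1 / 2) * (Matrix.trace (Pᵀ * P) + Matrix.trace (Qᵀ * Q)) := by
          have := add_le_add hPsum hQsum
          linarith
      _ = (1 / 2) * (frobeniusNorm P ^ 2 + frobeniusNorm Q ^ 2) := by
          rw [hfrobP, hfrobQ]
  exact le_trans (le_of_eq rfl) main
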